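/- Let K be a local field of characteristic p, m > 0 an integer prime to p, a ∈ K with v_K(a) = −m, α a root of T^p − T − a, and L = K(α). Then L|K is a totally ramified cyclic extension of degree p whose unique ramification break occurs at m: in the lower (equivalently upper) numbering, Gal(L|K)_m = Gal(L|K) and Gal(L|K)_{m+1} = {1}. -/

import Mathlib

open IntermediateField Polynomial

section AuxValuation

variable {L : Type*} [Field L] (w : L → ℤ)

theorem auxW_one (hmul : ∀ u v : L, u ≠ 0 → v ≠ 0 → w (u * v) = w u + w v) :
    w 1 = 0 := by
  have h := hmul 1 1 one_ne_zero one_ne_zero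
  rw [one_mul] at h
  omega

theorem auxW_neg (hmul : ∀ u v : L, u ≠ 0 → v ≠ 0 → w (u * v) = w u + w v)
    (u : L) (hu : u ≠ 0) : w (-u) = w u := by
  have h1 := hmul (-1 : L) (-1) (by norm_num) (by norm_num)
  rw [neg_mul_neg, one_mul, auxW_one w hmul] at h1
  have h2 := hmul (-1 : L) u (by norm_num) hu
  rw [neg_one_mul] at h2
  omega

theorem auxW_pow (hmul : ∀ u v : L, u ≠ 0 → v ≠ 0 → w (u * v) = w u + w v)
    (u : L) (hu : u ≠ 0) (n : ℕ) : w (u ^ n) = n * w u := by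
  induction n with
  | zero => simpa using auxW_one w hmul
  | succ n ih =>
    have h := hmul (u ^ n) u (pow_ne_zero _ hu) hu
    rw [← pow_succ] at h
    rw [h, ih]
    push_cast
    ring

theorem auxW_fix (hmul : ∀ u v : L, u ≠ 0 → v ≠ 0 → w (u * v) = w u + w v)
    (p : ℕ) (hp2 : 2 ≤ p) (x : L) (hx : x ≠ 0) (h : x ^ p = x) : w x = 0 := by
  have h1 := auxW_pow w hmul x hx p
  rw [h] at h1
  have h2 : ((p : ℤ) - 1) * w x = 0 := by linarith
  have h3 : ((p : ℤ) - 1) ≠ 0 := by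
    have : (2 : ℤ) ≤ p := by exact_mod_cast hp2
    omega
  rcases mul_eq_zero.mp h2 with h | h
  · exact absurd h h3
  · exact h

theorem auxW_addLeft (hmul : ∀ u v : L, u ≠ 0 → v ≠ 0 → w (u * v) = w u + w v)
    (hadd : ∀ u v : L, u ≠ 0 → v ≠ 0 → u + v ≠ 0 → min (w u) (w v) ≤ w (u + v))
    (x y : L) (hx : x ≠ 0) (h : y = 0 ∨ (y ≠ 0 ∧ w x < w y)) :
    x + y ≠ 0 ∧ w (x + y) = w x := by
  rcases h with rfl | ⟨hy, hlt⟩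
  · rw [add_zero]; exact ⟨hx, rfl⟩
  have hxy : x + y ≠ 0 := by
    intro h0
    have hyx : y = -x := eq_neg_of_add_eq_zero_right h0
    rw [hyx, auxW_neg w hmul x hx] at hlt
    omega
  have hge := hadd x y hx hy hxy
  have hle := hadd (x + y) (-y) hxy (neg_ne_zero.mpr hy) (by
    rw [add_neg_cancel_right]; exact hx)
  rw [add_neg_cancel_right, auxW_neg w hmul y hy] at hle
  refine ⟨hxy, ?_⟩
  omega

theorem auxW_sum_lt {ι : Type*}
    (hmul : ∀ u v : L, u ≠ 0 → v ≠ 0 → w (u * v) = w u + w v)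
    (hadd : ∀ u v : L, u ≠ 0 → v ≠ 0 → u + v ≠ 0 → min (w u) (w v) ≤ w (u + v))
    (c : ℤ) (f : ι → L) :
    ∀ (s : Finset ι), (∀ i ∈ s, f i = 0 ∨ (f i ≠ 0 ∧ c < w (f i))) →
      (∑ i ∈ s, f i) = 0 ∨ ((∑ i ∈ s, f i) ≠ 0 ∧ c < w (∑ i ∈ s, f i)) := by
  classical
  intro s
  induction s using Finset.induction_on with
  | empty => intro _; simp
  | @insert a s' ha ih =>
    intro h
    rw [Finset.sum_insert ha]
    rcases h a (Finset.mem_insert_self _ _) with h0 | ⟨ha0, hac⟩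
    · rw [h0, zero_add]
      exact ih fun i hi => h i (Finset.mem_insert_of_mem hi)
    rcases ih (fun i hi => h i (Finset.mem_insert_of_mem hi)) with h0 | ⟨hs0, hsc⟩
    · rw [h0, add_zero]
      exact Or.inr ⟨ha0, hac⟩
    by_cases hsum : f a + ∑ i ∈ s', f i = 0
    · exact Or.inl hsum
    · refine Or.inr ⟨hsum, lt_of_lt_of_le ?_ (hadd _ _ ha0 hs0 hsum)⟩
      exact lt_min hac hsc

theorem auxW_sum_min {ι : Type*} [DecidableEq ι]
    (hmul : ∀ u v : L, u ≠ 0 → v ≠ 0 → w (u * v) = w u + w v)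
    (hadd : ∀ u v : L, u ≠ 0 → v ≠ 0 → u + v ≠ 0 → min (w u) (w v) ≤ w (u + v))
    (s : Finset ι) (f : ι → L) (i₀ : ι) (hi₀ : i₀ ∈ s) (h0 : f i₀ ≠ 0)
    (h : ∀ i ∈ s, i ≠ i₀ → f i = 0 ∨ (f i ≠ 0 ∧ w (f i₀) < w (f i))) :
    (∑ i ∈ s, f i) ≠ 0 ∧ w (∑ i ∈ s, f i) = w (f i₀) := by
  rw [← Finset.add_sum_erase s f hi₀]
  rcases auxW_sum_lt w hmul hadd (w (f i₀)) f (s.erase i₀)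
      (fun i hi => h i (Finset.mem_of_mem_erase hi) (Finset.ne_of_mem_erase hi)) with
    hr0 | ⟨hr1, hr2⟩
  · rw [hr0, add_zero]
    exact ⟨h0, rfl⟩
  · exact auxW_addLeft w hmul hadd (f i₀) _ h0 (Or.inr ⟨hr1, hr2⟩)

end AuxValuation

set_option maxHeartbeats 2000000 in
set_option synthInstance.maxHeartbeats 500000 in
theorem stmt15_aux (p : ℕ) [Fact p.Prime] (K : Type*) [Field K] [CharP K p]
    (F : Type*) [Field F] [Algebra K F]
    (m : ℕ) (hm : 0 < m) (hmp : ¬ p ∣ m)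
    (v : K → ℤ) (hv_ex : ∀ s : ℤ, ∃ b : K, b ≠ 0 ∧ v b = s)
    (a : K) (ha0 : a ≠ 0) (ha : v a = -(m : ℤ))
    (α : F) (hα : α ^ p - α = algebraMap K F a)
    (w : K⟮α⟯ → ℤ)
    (hw_mul : ∀ u u' : K⟮α⟯, u ≠ 0 → u' ≠ 0 → w (u * u') = w u + w u')
    (hw_add : ∀ u u' : K⟮α⟯, u ≠ 0 → u' ≠ 0 → u + u' ≠ 0 →
      min (w u) (w u') ≤ w (u + u'))
    (hw_ext : ∀ z : K, z ≠ 0 → w (algebraMap K K⟮α⟯ z) = p * v z) :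
    IsGalois K K⟮α⟯ ∧
      IsCyclic (K⟮α⟯ ≃ₐ[K] K⟮α⟯) ∧
      Module.finrank K K⟮α⟯ = p ∧
      (∀ σ : K⟮α⟯ ≃ₐ[K] K⟮α⟯, ∀ z : K⟮α⟯, (z = 0 ∨ 0 ≤ w z) →
          σ z = z ∨ (m : ℤ) + 1 ≤ w (σ z - z)) ∧
      (∀ σ : K⟮α⟯ ≃ₐ[K] K⟮α⟯,
        (∀ z : K⟮α⟯, (z = 0 ∨ 0 ≤ w z) → σ z = z ∨ (m : ℤ) + 2 ≤ w (σ z - z)) →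
          σ = AlgEquiv.refl) := by
  classical
  have hp : p.Prime := Fact.out
  have hp2 : 2 ≤ p := hp.two_le
  haveI : CharP K⟮α⟯ p := charP_of_injective_algebraMap (algebraMap K K⟮α⟯).injective p
  have hKLinj : Function.Injective (algebraMap K K⟮α⟯) := (algebraMap K K⟮α⟯).injective
  set β : K⟮α⟯ := AdjoinSimple.gen K α with hβdef
  -- the Artin–Schreier equation inside K⟮α⟯
  have hβeq : β ^ p - β = algebraMap K K⟮α⟯ a := by
    have h1 : algebraMap K⟮α⟯ F (β ^ p - β) = algebraMap K⟮α⟯ F (algebraMap K K⟮α⟯ a) := by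
      rw [map_sub, map_pow, IntermediateField.AdjoinSimple.algebraMap_gen,
        ← IsScalarTower.algebraMap_apply]
      exact hα
    exact (algebraMap K⟮α⟯ F).injective h1
  have hβ0 : β ≠ 0 := by
    intro h
    apply ha0
    apply hKLinj
    rw [map_zero, ← hβeq, h]
    simp [zero_pow hp.ne_zero]
  -- the ℕ-cast Frobenius fixed points
  set φ : ZMod p →+* K⟮α⟯ := ZMod.castHom dvd_rfl K⟮α⟯ with hφdef
  have hnatfix : ∀ n : ℕ, ((n : K⟮α⟯)) ^ p = (n : K⟮α⟯) := by
    intro n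
    calc ((n : K⟮α⟯)) ^ p = (φ (n : ZMod p)) ^ p := by rw [map_natCast φ]
      _ = φ ((n : ZMod p) ^ p) := (map_pow φ _ p).symm
      _ = φ (n : ZMod p) := by rw [ZMod.pow_card]
      _ = (n : K⟮α⟯) := map_natCast φ n
  have hwnat : ∀ n : ℕ, ((n : K⟮α⟯)) ≠ 0 → w ((n : K⟮α⟯)) = 0 :=
    fun n hn => auxW_fix w hw_mul p hp2 _ hn (hnatfix n)
  -- valuation of a and of β
  have hwa : w (algebraMap K K⟮α⟯ a) = -((p : ℤ) * m) := by
    rw [hw_ext a ha0, ha]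
    ring
  have hβpβ : β ^ p ≠ β := by
    intro h
    apply ha0
    apply hKLinj
    rw [map_zero, ← hβeq, h]
    ring
  have hwβneg : w β < 0 := by
    by_contra h
    push_neg at h
    have h1 : β ^ p - β ≠ 0 := sub_ne_zero.mpr hβpβ
    have h2 := hw_add (β ^ p) (-β) (pow_ne_zero _ hβ0) (neg_ne_zero.mpr hβ0)
      (by rwa [← sub_eq_add_neg])
    rw [← sub_eq_add_neg, hβeq, hwa, auxW_pow w hw_mul β hβ0 p,
      auxW_neg w hw_mul β hβ0] at h2
    have h3 : (0 : ℤ) ≤ (p : ℤ) * w β := by positivity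
    have h4 : (0 : ℤ) < (p : ℤ) * m := by
      have h5 : (2 : ℤ) ≤ p := by exact_mod_cast hp2
      have h6 : (1 : ℤ) ≤ m := by exact_mod_cast hm
      nlinarith
    omega
  have hwβ : w β = -(m : ℤ) := by
    have hlt : w (-β) = w β := auxW_neg w hw_mul β hβ0
    have h4 := auxW_addLeft w hw_mul hw_add (β ^ p) (-β) (pow_ne_zero _ hβ0)
      (Or.inr ⟨neg_ne_zero.mpr hβ0, by
        rw [hlt, auxW_pow w hw_mul β hβ0 p]
        have h1 : (2 : ℤ) ≤ p := by exact_mod_cast hp2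
        nlinarith⟩)
    rw [← sub_eq_add_neg, hβeq, hwa, auxW_pow w hw_mul β hβ0 p] at h4
    have h5 : (p : ℤ) * w β = (p : ℤ) * (-(m : ℤ)) := by
      linarith [h4.2]
    have h6 : (p : ℤ) ≠ 0 := by positivity
    exact mul_left_cancel₀ h6 h5
  -- the minimal polynomial considerations
  set f : K[X] := X ^ p - X - C a with hfdef
  have hdegsmall : ((X : K[X]) + C a).degree < ((X : K[X]) ^ p).degree := by
    rw [degree_X_pow]
    refine lt_of_le_of_lt (degree_add_le _ _) ?_
    rw [degree_X]
    have h1 : (C a).degree ≤ 1 := le_trans degree_C_le (by norm_num)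
    have h2 : (1 : WithBot ℕ) < p := by
      exact_mod_cast Nat.one_lt_cast.mpr hp.one_lt
    simpa using lt_of_le_of_lt (max_le le_rfl h1) h2
  have hfalt : f = X ^ p - ((X : K[X]) + C a) := by rw [hfdef]; ring
  have hfmonic : f.Monic := by
    rw [hfalt]
    exact (monic_X_pow p).sub_of_left hdegsmall
  have hfdeg : f.natDegree = p := by
    have h1 : f.degree = p := by
      rw [hfalt, degree_sub_eq_left_of_degree_lt hdegsmall, degree_X_pow]
    exact natDegree_eq_of_degree_eq_some h1
  have haeval : (Polynomial.aeval α) f = 0 := by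
    rw [hfdef]
    simp only [map_sub, map_pow, aeval_X, aeval_C]
    rw [sub_sub, sub_eq_zero, ← hα]
    ring
  have haint : IsIntegral K α := ⟨f, hfmonic, by rwa [← aeval_def]⟩
  have hdvd : minpoly K α ∣ f := minpoly.dvd K α haeval
  have hdeg_le : (minpoly K α).natDegree ≤ p := by
    have := natDegree_le_of_dvd hdvd hfmonic.ne_zero
    omega
  -- ℤ-arithmetic distinctness
  have hintdist : ∀ (di dj : ℤ) (i j : ℕ), i < p → j < p →
      (p : ℤ) * di - (m : ℤ) * i = (p : ℤ) * dj - (m : ℤ) * j → i = j := by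
    intro di dj i j hi hj h
    have hdvd2 : (p : ℤ) ∣ (m : ℤ) * ((i : ℤ) - (j : ℤ)) := ⟨di - dj, by ring_nf; linarith⟩
    rcases Int.Prime.dvd_mul' hp hdvd2 with h' | h'
    · exact absurd (Int.natCast_dvd_natCast.mp h') hmp
    · have h3 : (p : ℕ) ∣ ((i : ℤ) - (j : ℤ)).natAbs := by
        have := Int.natAbs_dvd_natAbs.mpr h'
        simpa using this
      have h4 : ((i : ℤ) - (j : ℤ)).natAbs < p := by omega
      have h5 := Nat.eq_zero_of_dvd_of_lt h3
      omega
  -- valuation of monomial terms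
  have hwterm : ∀ (x : K), x ≠ 0 → ∀ i : ℕ,
      x • β ^ i ≠ 0 ∧ w (x • β ^ i) = (p : ℤ) * v x - (m : ℤ) * i := by
    intro x hx i
    have halg : algebraMap K K⟮α⟯ x ≠ 0 := (map_ne_zero_iff _ hKLinj).mpr hx
    constructor
    · rw [Algebra.smul_def]
      exact mul_ne_zero halg (pow_ne_zero _ hβ0)
    · rw [Algebra.smul_def, hw_mul _ _ halg (pow_ne_zero _ hβ0), hw_ext x hx,
        auxW_pow w hw_mul β hβ0 i, hwβ]
      ring
  have hdistW : ∀ (x y : K), x ≠ 0 → y ≠ 0 → ∀ i j : ℕ, i < p → j < p →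
      w (x • β ^ i) = w (y • β ^ j) → i = j := by
    intro x y hx hy i j hi hj h
    rw [(hwterm x hx i).2, (hwterm y hy j).2] at h
    exact hintdist _ _ i j hi hj h
  -- key: sums of monomials attain the minimum valuation
  have hkey : ∀ (n : ℕ), n ≤ p → ∀ g : Fin n → K, ∀ j : Fin n, g j ≠ 0 →
      (∑ i, g i • β ^ (i : ℕ)) ≠ 0 ∧ ∃ i₀ : Fin n, g i₀ ≠ 0 ∧
        w (∑ i, g i • β ^ (i : ℕ)) = w (g i₀ • β ^ ((i₀ : ℕ))) ∧
        ∀ i : Fin n, g i ≠ 0 → w (g i₀ • β ^ ((i₀ : ℕ))) ≤ w (g i • β ^ ((i : ℕ))) := by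
    intro n hn g j hj
    obtain ⟨i₀, hi₀s, hi₀min⟩ := Finset.exists_min_image
      ((Finset.univ : Finset (Fin n)).filter fun i => g i ≠ 0)
      (fun i => w (g i • β ^ (i : ℕ)))
      ⟨j, Finset.mem_filter.mpr ⟨Finset.mem_univ _, hj⟩⟩
    have hgi₀ : g i₀ ≠ 0 := (Finset.mem_filter.mp hi₀s).2
    have hmin' : ∀ i : Fin n, g i ≠ 0 → w (g i₀ • β ^ (i₀ : ℕ)) ≤ w (g i • β ^ (i : ℕ)) :=
      fun i hi => hi₀min i (Finset.mem_filter.mpr ⟨Finset.mem_univ _, hi⟩)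
    have hstrict : ∀ i ∈ (Finset.univ : Finset (Fin n)), i ≠ i₀ →
        g i • β ^ (i : ℕ) = 0 ∨
          (g i • β ^ (i : ℕ) ≠ 0 ∧ w (g i₀ • β ^ (i₀ : ℕ)) < w (g i • β ^ (i : ℕ))) := by
      intro i _ hne
      by_cases hgi : g i = 0
      · left; rw [hgi, zero_smul]
      · right
        refine ⟨(hwterm (g i) hgi _).1, lt_of_le_of_ne (hmin' i hgi) fun heq => hne ?_⟩
        exact Fin.ext ((hdistW (g i₀) (g i) hgi₀ hgi _ _
          (lt_of_lt_of_le i₀.isLt hn) (lt_of_lt_of_le i.isLt hn) heq).symm)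
    have hsum := auxW_sum_min w hw_mul hw_add Finset.univ
      (fun i : Fin n => g i • β ^ (i : ℕ)) i₀ (Finset.mem_univ _)
      (hwterm (g i₀) hgi₀ _).1 hstrict
    exact ⟨hsum.1, i₀, hgi₀, hsum.2, hmin'⟩
  -- linear independence of 1, β, ..., β^(p-1), hence degree p
  have hli : LinearIndependent K fun i : Fin p => β ^ (i : ℕ) := by
    rw [Fintype.linearIndependent_iff]
    intro g hg
    by_contra hne
    push_neg at hne
    obtain ⟨j, hj⟩ := hne
    exact (hkey p le_rfl g j hj).1 hg
  haveI hFD : FiniteDimensional K K⟮α⟯ := IntermediateField.adjoin.finiteDimensional haint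
  have hfr : Module.finrank K K⟮α⟯ = (minpoly K α).natDegree :=
    IntermediateField.adjoin.finrank haint
  have hge : p ≤ Module.finrank K K⟮α⟯ := by
    simpa using hli.fintype_card_le_finrank
  have hfrp : Module.finrank K K⟮α⟯ = p := le_antisymm (by rw [hfr]; exact hdeg_le) hge
  -- splitting field property
  haveI : CharP K[X] p := Polynomial.instCharP p
  haveI : CharP (K⟮α⟯ : IntermediateField K F)[X] p := Polynomial.instCharP p
  have h1 : ((X : (ZMod p)[X]) ^ p - X).roots = Finset.univ.val := by
    have h := FiniteField.roots_X_pow_card_sub_X (ZMod p)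
    rwa [ZMod.card] at h
  have hsplitsZ : Splits ((X : (ZMod p)[X]) ^ p - X) := by
    rw [splits_iff_card_roots, h1]
    have h2 : ((X : (ZMod p)[X]) ^ p - X).natDegree = p :=
      FiniteField.X_pow_card_sub_X_natDegree_eq (ZMod p) hp.one_lt
    rw [h2]
    simpa using (ZMod.card p)
  have hsplitsL : Splits ((X : (K⟮α⟯ : IntermediateField K F)[X]) ^ p - X) := by
    have h3 := hsplitsZ.map φ
    rwa [Polynomial.map_sub, Polynomial.map_pow, map_X] at h3
  have hfL : f.map (algebraMap K K⟮α⟯)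
      = (X : (K⟮α⟯ : IntermediateField K F)[X]) ^ p - X - C (algebraMap K K⟮α⟯ a) := by
    rw [hfdef]
    simp [Polynomial.map_sub, Polynomial.map_pow, Polynomial.map_X, Polynomial.map_C]
  have hcomp : ((X : (K⟮α⟯ : IntermediateField K F)[X]) ^ p - X).comp (X - C β)
      = f.map (algebraMap K K⟮α⟯) := by
    rw [hfL, sub_comp, pow_comp, X_comp, ← hβeq]
    rw [sub_pow_char]
    rw [C_sub, C_pow]
    ring
  have hsplits : Splits (f.map (algebraMap K K⟮α⟯)) := by
    rw [← hcomp]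
    exact hsplitsL.comp_X_sub_C _
  have hβroot : β ∈ f.rootSet K⟮α⟯ := by
    rw [Polynomial.mem_rootSet]
    refine ⟨hfmonic.ne_zero, ?_⟩
    rw [hfdef]
    simp only [map_sub, map_pow, aeval_X, aeval_C]
    rw [sub_sub, sub_eq_zero, ← hβeq]
    ring
  haveI hSF : IsSplittingField K K⟮α⟯ f := by
    constructor
    · exact hsplits
    · rw [eq_top_iff, ← PowerBasis.adjoin_gen_eq_top (IntermediateField.adjoin.powerBasis haint)]
      apply Algebra.adjoin_mono
      intro x hx
      rw [Set.mem_singleton_iff] at hx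
      rw [hx]
      exact hβroot
  have hfsep : f.Separable := by
    have hder : derivative f = -1 := by
      rw [hfdef]
      simp [derivative_X_pow, CharP.cast_eq_zero K p]
    rw [Polynomial.separable_def, hder]
    exact ⟨0, -1, by ring⟩
  haveI hGal : IsGalois K K⟮α⟯ := IsGalois.of_separable_splitting_field hfsep
  have hcard : Nat.card (K⟮α⟯ ≃ₐ[K] K⟮α⟯) = p := by
    rw [IsGalois.card_aut_eq_finrank, hfrp]
  have hcyc : IsCyclic (K⟮α⟯ ≃ₐ[K] K⟮α⟯) := isCyclic_of_prime_card hcard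
  -- automorphisms shift β by a Frobenius-fixed element
  have hc : ∀ σ : K⟮α⟯ ≃ₐ[K] K⟮α⟯, (σ β - β) ^ p = σ β - β := by
    intro σ
    have h1 : (σ β) ^ p - σ β = algebraMap K K⟮α⟯ a := by
      rw [← map_pow, ← map_sub, hβeq, AlgEquiv.commutes]
    rw [sub_pow_char]
    have h2 : (σ β) ^ p = σ β + algebraMap K K⟮α⟯ a := by linear_combination h1
    have h3 : β ^ p = β + algebraMap K K⟮α⟯ a := by linear_combination hβeq
    rw [h2, h3]
    ring
  have hgen : ∀ σ : K⟮α⟯ ≃ₐ[K] K⟮α⟯, σ β = β → σ = AlgEquiv.refl := by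
    intro σ hσ
    have h1 : (σ : K⟮α⟯ →ₐ[K] K⟮α⟯)
        = ((AlgEquiv.refl : K⟮α⟯ ≃ₐ[K] K⟮α⟯) : K⟮α⟯ →ₐ[K] K⟮α⟯) :=
      (IntermediateField.adjoin.powerBasis haint).algHom_ext hσ
    exact AlgEquiv.ext fun x => by
      have h2 := DFunLike.congr_fun h1 x
      simpa using h2
  -- the difference (β + c)^i - β^i
  have hD : ∀ c : K⟮α⟯, c ≠ 0 → c ^ p = c → ∀ i : ℕ, 1 ≤ i → i < p →
      ((β + c) ^ i - β ^ i ≠ 0 ∧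
        w ((β + c) ^ i - β ^ i) = -(m : ℤ) * ((i - 1 : ℕ) : ℤ)) := by
    intro c hc0 hcp i hi1 hip
    have hwc : w c = 0 := auxW_fix w hw_mul p hp2 c hc0 hcp
    have hexp : (β + c) ^ i - β ^ i
        = ∑ j ∈ Finset.range i, β ^ j * c ^ (i - j) * ((i.choose j : ℕ) : K⟮α⟯) := by
      rw [add_pow, Finset.sum_range_succ, Nat.sub_self, pow_zero, Nat.choose_self,
        Nat.cast_one, mul_one, mul_one, add_sub_cancel_right]
    have hU : ∀ j : ℕ, ((i.choose j : ℕ) : K⟮α⟯) ≠ 0 →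
        (β ^ j * c ^ (i - j) * ((i.choose j : ℕ) : K⟮α⟯) ≠ 0 ∧
          w (β ^ j * c ^ (i - j) * ((i.choose j : ℕ) : K⟮α⟯)) = -(m : ℤ) * j) := by
      intro j hch
      have h1 : β ^ j * c ^ (i - j) ≠ 0 :=
        mul_ne_zero (pow_ne_zero _ hβ0) (pow_ne_zero _ hc0)
      refine ⟨mul_ne_zero h1 hch, ?_⟩
      rw [hw_mul _ _ h1 hch, hw_mul _ _ (pow_ne_zero _ hβ0) (pow_ne_zero _ hc0),
        auxW_pow w hw_mul β hβ0 j, auxW_pow w hw_mul c hc0 (i - j), hwβ, hwc,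
        hwnat _ hch]
      ring
    have hchoose : i.choose (i - 1) = i := by
      have h := Nat.choose_symm (Nat.sub_le i 1)
      rw [Nat.sub_sub_self hi1, Nat.choose_one_right] at h
      exact h.symm
    have hilne : ((i : ℕ) : K⟮α⟯) ≠ 0 := by
      rw [Ne, CharP.cast_eq_zero_iff K⟮α⟯ p]
      intro hdvd2
      exact absurd (Nat.le_of_dvd (by omega) hdvd2) (by omega)
    have hchL : ((i.choose (i - 1) : ℕ) : K⟮α⟯) ≠ 0 := by rw [hchoose]; exact hilne
    have hstrict : ∀ j ∈ Finset.range i, j ≠ i - 1 →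
        β ^ j * c ^ (i - j) * ((i.choose j : ℕ) : K⟮α⟯) = 0 ∨
          (β ^ j * c ^ (i - j) * ((i.choose j : ℕ) : K⟮α⟯) ≠ 0 ∧
            w (β ^ (i - 1) * c ^ (i - (i - 1)) * ((i.choose (i - 1) : ℕ) : K⟮α⟯)) <
              w (β ^ j * c ^ (i - j) * ((i.choose j : ℕ) : K⟮α⟯))) := by
      intro j hj hne
      by_cases hch : ((i.choose j : ℕ) : K⟮α⟯) = 0
      · left; rw [hch, mul_zero]
      · right
        refine ⟨(hU j hch).1, ?_⟩
        rw [(hU j hch).2, (hU _ hchL).2]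
        have hj' : j < i - 1 := by
          have := Finset.mem_range.mp hj
          omega
        have hm' : (0 : ℤ) < m := by exact_mod_cast hm
        have hjc : (j : ℤ) < ((i - 1 : ℕ) : ℤ) := by exact_mod_cast hj'
        nlinarith
    obtain ⟨hne, hwe⟩ := auxW_sum_min w hw_mul hw_add (Finset.range i)
      (fun j => β ^ j * c ^ (i - j) * ((i.choose j : ℕ) : K⟮α⟯)) (i - 1)
      (Finset.mem_range.mpr (by omega)) (hU _ hchL).1 hstrict
    rw [hexp]
    exact ⟨hne, by rw [hwe, (hU _ hchL).2]⟩
  -- power basis representation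
  set B := IntermediateField.adjoin.powerBasis haint with hBdef
  have hdimp : B.dim = p := by
    have h1 := B.finrank
    omega
  have hgenβ : B.gen = β := rfl
  -- PART 4 : G_m is everything
  have part4 : ∀ σ : K⟮α⟯ ≃ₐ[K] K⟮α⟯, ∀ z : K⟮α⟯, (z = 0 ∨ 0 ≤ w z) →
      σ z = z ∨ (m : ℤ) + 1 ≤ w (σ z - z) := by
    intro σ z hz
    rcases hz with rfl | hwz
    · left; exact map_zero σ
    by_cases hz0 : z = 0
    · left; rw [hz0]; exact map_zero σ
    by_cases hσβ : σ β = β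
    · left; rw [hgen σ hσβ]; rfl
    set c := σ β - β with hcdef
    have hc0 : c ≠ 0 := sub_ne_zero.mpr hσβ
    have hσβc : σ β = β + c := by rw [hcdef]; ring
    set g : Fin B.dim → K := fun i => B.basis.repr z i with hgdef
    have hzrepr : z = ∑ i, g i • β ^ (i : ℕ) := by
      conv_lhs => rw [← B.basis.sum_repr z]
      refine Finset.sum_congr rfl fun i _ => ?_
      rw [hgdef]
      congr 1
      rw [B.coe_basis, hgenβ]
    have hex : ∃ j, g j ≠ 0 := by
      by_contra hno
      push_neg at hno
      apply hz0
      rw [hzrepr]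
      exact Finset.sum_eq_zero fun i _ => by rw [hno i, zero_smul]
    obtain ⟨j, hj⟩ := hex
    obtain ⟨hSne, i₀, hgi₀, hweq, hwmin⟩ := hkey B.dim (le_of_eq hdimp) g j hj
    have hge0 : ∀ i : Fin B.dim, g i ≠ 0 → 0 ≤ w (g i • β ^ (i : ℕ)) := by
      intro i hi
      refine le_trans ?_ (hwmin i hi)
      rw [← hweq, ← hzrepr]
      exact hwz
    have hσz : σ z - z = ∑ i, g i • ((β + c) ^ (i : ℕ) - β ^ (i : ℕ)) := by
      conv_lhs => rw [hzrepr]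
      rw [map_sum, ← Finset.sum_sub_distrib]
      refine Finset.sum_congr rfl fun i _ => ?_
      simp only [Algebra.smul_def, map_mul, map_pow, AlgEquiv.commutes, hσβc]
      ring
    have hterms : ∀ i : Fin B.dim,
        g i • ((β + c) ^ (i : ℕ) - β ^ (i : ℕ)) = 0 ∨
          (g i • ((β + c) ^ (i : ℕ) - β ^ (i : ℕ)) ≠ 0 ∧
            (m : ℤ) < w (g i • ((β + c) ^ (i : ℕ) - β ^ (i : ℕ)))) := by
      intro i
      by_cases hgi : g i = 0
      · left; rw [hgi, zero_smul]
      by_cases hi0 : (i : ℕ) = 0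
      · left; rw [hi0]; simp
      right
      have hilt : (i : ℕ) < p := lt_of_lt_of_le i.isLt (le_of_eq hdimp)
      obtain ⟨hD0, hDw⟩ := hD c hc0 (hc σ) (i : ℕ)
        (Nat.one_le_iff_ne_zero.mpr hi0) hilt
      have halg : algebraMap K K⟮α⟯ (g i) ≠ 0 := (map_ne_zero_iff _ hKLinj).mpr hgi
      constructor
      · rw [Algebra.smul_def]; exact mul_ne_zero halg hD0
      rw [Algebra.smul_def, hw_mul _ _ halg hD0, hw_ext _ hgi, hDw]
      have h1 : 0 ≤ (p : ℤ) * v (g i) - (m : ℤ) * (i : ℕ) := by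
        have h2 := hge0 i hgi
        rwa [(hwterm (g i) hgi _).2] at h2
      have h2 : (p : ℤ) * v (g i) ≠ (m : ℤ) * ((i : ℕ) : ℤ) := by
        intro he
        have hdv : (p : ℤ) ∣ (m : ℤ) * ((i : ℕ) : ℤ) := ⟨v (g i), he.symm⟩
        rcases Int.Prime.dvd_mul' hp hdv with h' | h'
        · exact hmp (Int.natCast_dvd_natCast.mp h')
        · have h3 : p ∣ (i : ℕ) := by exact_mod_cast h'
          have h4 := Nat.le_of_dvd (Nat.pos_of_ne_zero hi0) h3
          omega
      rw [Nat.cast_sub (Nat.one_le_iff_ne_zero.mpr hi0)]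
      have h3 : 0 < (p : ℤ) * v (g i) - (m : ℤ) * (i : ℕ) :=
        lt_of_le_of_ne h1 fun h => h2 (by linarith)
      push_cast
      push_cast at h3
      linarith
    rcases auxW_sum_lt w hw_mul hw_add (m : ℤ)
        (fun i : Fin B.dim => g i • ((β + c) ^ (i : ℕ) - β ^ (i : ℕ)))
        Finset.univ (fun i _ => hterms i) with h0 | ⟨_, hlt⟩
    · left
      rw [← sub_eq_zero, hσz]
      exact h0
    · right
      rw [hσz]
      omega
  -- PART 5 : G_{m+1} is trivial
  have part5 : ∀ σ : K⟮α⟯ ≃ₐ[K] K⟮α⟯,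
      (∀ z : K⟮α⟯, (z = 0 ∨ 0 ≤ w z) → σ z = z ∨ (m : ℤ) + 2 ≤ w (σ z - z)) →
      σ = AlgEquiv.refl := by
    intro σ hσ
    by_cases hσβ : σ β = β
    · exact hgen σ hσβ
    exfalso
    set c := σ β - β with hcdef
    have hc0 : c ≠ 0 := sub_ne_zero.mpr hσβ
    have hσβc : σ β = β + c := by rw [hcdef]; ring
    haveI : NeZero p := ⟨hp.ne_zero⟩
    have hmz : ((m : ZMod p)) ≠ 0 := by
      rw [Ne, ZMod.natCast_eq_zero_iff]
      exact hmp
    set u : ZMod p := -(m : ZMod p)⁻¹ with hu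
    set i₀ : ℕ := u.val with hi₀def
    have hiu : ((i₀ : ℕ) : ZMod p) = u := ZMod.natCast_rightInverse u
    have hmi : ((m * i₀ : ℕ) : ZMod p) = -1 := by
      push_cast
      rw [hiu, hu, mul_neg, mul_inv_cancel₀ hmz]
    have hdvd1 : p ∣ m * i₀ + 1 := by
      have h1 : ((m * i₀ + 1 : ℕ) : ZMod p) = 0 := by
        push_cast
        push_cast at hmi
        rw [hmi]
        ring
      exact (ZMod.natCast_eq_zero_iff _ _).mp h1
    have hi₀lt : i₀ < p := ZMod.val_lt u
    have hi₀0 : i₀ ≠ 0 := by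
      intro h
      have hu0 : u = 0 := (ZMod.val_eq_zero u).mp h
      rw [hu] at hu0
      apply hmz
      rwa [neg_eq_zero, inv_eq_zero] at hu0
    set s : ℕ := (m * i₀ + 1) / p with hsdef
    have hps : p * s = m * i₀ + 1 := Nat.mul_div_cancel' hdvd1
    obtain ⟨b, hb0, hbord⟩ := hv_ex (s : ℤ)
    have halgb : algebraMap K K⟮α⟯ b ≠ 0 := (map_ne_zero_iff _ hKLinj).mpr hb0
    set z : K⟮α⟯ := algebraMap K K⟮α⟯ b * β ^ i₀ with hzdef
    have hz0 : z ≠ 0 := mul_ne_zero halgb (pow_ne_zero _ hβ0)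
    have hpsZ : (p : ℤ) * (s : ℤ) = (m : ℤ) * (i₀ : ℤ) + 1 := by exact_mod_cast hps
    have hwz : w z = 1 := by
      rw [hzdef, hw_mul _ _ halgb (pow_ne_zero _ hβ0), hw_ext b hb0, hbord,
        auxW_pow w hw_mul β hβ0 i₀, hwβ]
      linarith
    obtain ⟨hD0, hDw⟩ := hD c hc0 (hc σ) i₀ (Nat.one_le_iff_ne_zero.mpr hi₀0) hi₀lt
    have hσz : σ z - z = algebraMap K K⟮α⟯ b * ((β + c) ^ i₀ - β ^ i₀) := by
      rw [hzdef, map_mul, AlgEquiv.commutes, map_pow, hσβc, mul_sub]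
    have hne : σ z ≠ z := by
      rw [← sub_ne_zero, hσz]
      exact mul_ne_zero halgb hD0
    have hwσz : w (σ z - z) = (m : ℤ) + 1 := by
      rw [hσz, hw_mul _ _ halgb hD0, hw_ext b hb0, hbord, hDw]
      rw [Nat.cast_sub (Nat.one_le_iff_ne_zero.mpr hi₀0)]
      push_cast
      linarith
    rcases hσ z (Or.inr (by rw [hwz]; norm_num)) with h | h
    · exact hne h
    · rw [hwσz] at h
      omega
  exact ⟨hGal, hcyc, hfrp, part4, part5⟩

/- STATEMENT 15: K local of characteristic p, m > 0 prime to p, v_K(a) = -m,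
α a root of T^p - T - a, L = K(α).  Then L|K is a totally ramified cyclic
extension of degree p (total ramification being encoded by the hypothesis that
the normalized valuation w of L extends p·v_K), and its unique ramification
break is at m: Gal(L|K)_m = Gal(L|K) and Gal(L|K)_{m+1} = {1}, where σ ∈ G_t iff
w(σz - z) ≥ t+1 for all integers z of L. -/
theorem stmt15 (p : ℕ) [Fact p.Prime] (k : Type*) [Field k] [Fintype k] [CharP k p]
    (m : ℕ) (hm : 0 < m) (hmp : ¬ p ∣ m)
    (a : LaurentSeries k) (ha0 : a ≠ 0) (ha : a.order = -(m : ℤ))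
    (α : AlgebraicClosure (LaurentSeries k))
    (hα : α ^ p - α = algebraMap (LaurentSeries k) (AlgebraicClosure (LaurentSeries k)) a)
    (w : (LaurentSeries k)⟮α⟯ → ℤ)
    (hw_mul : ∀ u v : (LaurentSeries k)⟮α⟯, u ≠ 0 → v ≠ 0 → w (u * v) = w u + w v)
    (hw_add : ∀ u v : (LaurentSeries k)⟮α⟯, u ≠ 0 → v ≠ 0 → u + v ≠ 0 →
      min (w u) (w v) ≤ w (u + v))
    (hw_ext : ∀ z : LaurentSeries k, z ≠ 0 →
      w (algebraMap (LaurentSeries k) (LaurentSeries k)⟮α⟯ z) = p * z.order) :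
    IsGalois (LaurentSeries k) (LaurentSeries k)⟮α⟯ ∧
      IsCyclic ((LaurentSeries k)⟮α⟯ ≃ₐ[LaurentSeries k] (LaurentSeries k)⟮α⟯) ∧
      Module.finrank (LaurentSeries k) (LaurentSeries k)⟮α⟯ = p ∧
      (∀ σ : (LaurentSeries k)⟮α⟯ ≃ₐ[LaurentSeries k] (LaurentSeries k)⟮α⟯,
        ∀ z : (LaurentSeries k)⟮α⟯, (z = 0 ∨ 0 ≤ w z) →
          σ z = z ∨ (m : ℤ) + 1 ≤ w (σ z - z)) ∧
      (∀ σ : (LaurentSeries k)⟮α⟯ ≃ₐ[LaurentSeries k] (LaurentSeries k)⟮α⟯,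
        (∀ z : (LaurentSeries k)⟮α⟯, (z = 0 ∨ 0 ≤ w z) →
          σ z = z ∨ (m : ℤ) + 2 ≤ w (σ z - z)) → σ = AlgEquiv.refl) := by
  haveI : CharP (LaurentSeries k) p :=
    charP_of_injective_algebraMap (algebraMap k (LaurentSeries k)).injective p
  exact stmt15_aux p (LaurentSeries k) (AlgebraicClosure (LaurentSeries k)) m hm hmp
    (fun z => z.order)
    (fun s => ⟨HahnSeries.single s 1, HahnSeries.single_ne_zero one_ne_zero,
      HahnSeries.order_single one_ne_zero⟩)
    a ha0 ha α hα w hw_mul hw_add hw_ext
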